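/- Let f be a non-degenerate harmonic mapping on the Riemann sphere with poles z_1, …, z_m and critical set 𝒞. Then 𝒞 and the caustics f(𝒞) are compact subsets of ℂ; in particular, no pole z_j is an accumulation point of 𝒞. -/

import Mathlib

open Filter Metric Set Topology

noncomputable section

/-- The Wirtinger derivative ∂f = (1/2)(∂f/∂x − i ∂f/∂y). -/
def wDz (f : ℂ → ℂ) (z : ℂ) : ℂ :=
  (fderiv ℝ f z 1 - Complex.I * fderiv ℝ f z Complex.I) / 2

/-- The Wirtinger derivative ∂̄f = (1/2)(∂f/∂x + i ∂f/∂y). -/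
def wDzbar (f : ℂ → ℂ) (z : ℂ) : ℂ :=
  (fderiv ℝ f z 1 + Complex.I * fderiv ℝ f z Complex.I) / 2

/-- A harmonic mapping on an open set: locally `f = h + conj ∘ g` with `h`, `g` holomorphic. -/
def IsHarmonicMappingOn (f : ℂ → ℂ) (Ω : Set ℂ) : Prop :=
  ∀ z ∈ Ω, ∃ ε > 0, Metric.ball z ε ⊆ Ω ∧ ∃ h g : ℂ → ℂ,
    DifferentiableOn ℂ h (Metric.ball z ε) ∧ DifferentiableOn ℂ g (Metric.ball z ε) ∧
    ∀ w ∈ Metric.ball z ε, f w = h w + (starRingEnd ℂ) (g w)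

/-- The harmonic Newton map of `f − η`. -/
def newtonMap (f : ℂ → ℂ) (η : ℂ) (z : ℂ) : ℂ :=
  z - ((starRingEnd ℂ) (wDz f z) * (f z - η) - wDzbar f z * (starRingEnd ℂ) (f z - η)) /
      ((((‖wDz f z‖) ^ 2 - (‖wDzbar f z‖) ^ 2 : ℝ)) : ℂ)

/-- `zstar` attracts `s` under the harmonic Newton map of `f − η`. -/
def NewtonAttracts (f : ℂ → ℂ) (η : ℂ) (s zstar : ℂ) : Prop :=
  Filter.Tendsto (fun k => (newtonMap f η)^[k] s) Filter.atTop (nhds zstar)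

/-- Limit of the harmonic Newton iteration started at `s`. -/
def newtonLim (f : ℂ → ℂ) (η : ℂ) (s : ℂ) : ℂ :=
  limUnder Filter.atTop (fun k => (newtonMap f η)^[k] s)

/-- `S` is a (minimal) prediction set for the solution set `Z` of `f(z) = η`. -/
def IsPredSet (f : ℂ → ℂ) (η : ℂ) (S Z : Set ℂ) : Prop :=
  S.Finite ∧ Z.Finite ∧ S.ncard = Z.ncard ∧
    ∀ z ∈ Z, ∃! s, s ∈ S ∧ NewtonAttracts f η s z

/-- A non-degenerate harmonic mapping on the Riemann sphere. -/
structure NondegenHM where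
  m : ℕ
  pole : Fin m → ℂ
  pole_inj : Function.Injective pole
  f : ℂ → ℂ
  r : RatFunc ℂ
  s : RatFunc ℂ
  A : Fin m → ℂ
  r_poles : ∀ w : ℂ, (RatFunc.denom r).eval w = 0 → ∃ j, w = pole j
  s_poles : ∀ w : ℂ, (RatFunc.denom s).eval w = 0 → ∃ j, w = pole j
  f_eq : ∀ z : ℂ, (∀ j, z ≠ pole j) →
    f z = r.eval (RingHom.id ℂ) z + (starRingEnd ℂ) (s.eval (RingHom.id ℂ) z)
      + ∑ j, 2 * A j * ((Real.log (‖z - pole j‖) : ℝ) : ℂ)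
  pole_cond : ∀ j, ∃ n : ℕ, 1 ≤ n ∧ ∃ a b : ℂ, ‖a‖ ≠ ‖b‖ ∧
    Filter.Tendsto (fun z : ℂ => (z - pole j) ^ n * r.eval (RingHom.id ℂ) z)
      (nhdsWithin (pole j) {pole j}ᶜ) (nhds a) ∧
    Filter.Tendsto (fun z : ℂ => (z - pole j) ^ n * s.eval (RingHom.id ℂ) z)
      (nhdsWithin (pole j) {pole j}ᶜ) (nhds b)
  infty_cond :
    (∃ n : ℕ, 1 ≤ n ∧ ∃ a b : ℂ, ‖a‖ ≠ ‖b‖ ∧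
      Filter.Tendsto (fun z : ℂ => r.eval (RingHom.id ℂ) z / z ^ n)
        (Bornology.cobounded ℂ) (nhds a) ∧
      Filter.Tendsto (fun z : ℂ => s.eval (RingHom.id ℂ) z / z ^ n)
        (Bornology.cobounded ℂ) (nhds b)) ∨
    ((∃ C : ℝ, ∀ᶠ z : ℂ in Bornology.cobounded ℂ, ‖r.eval (RingHom.id ℂ) z‖ ≤ C) ∧
     (∃ C : ℝ, ∀ᶠ z : ℂ in Bornology.cobounded ℂ, ‖s.eval (RingHom.id ℂ) z‖ ≤ C) ∧
     ∑ j, A j = 0)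
  crit_bounded : Bornology.IsBounded
    {z : ℂ | (∀ j, z ≠ pole j) ∧ ‖wDz f z‖ = ‖wDzbar f z‖}

/-- The critical set 𝒞 of a non-degenerate harmonic mapping. -/
def critSet (F : NondegenHM) : Set ℂ :=
  {z : ℂ | (∀ j, z ≠ F.pole j) ∧ ‖wDz F.f z‖ = ‖wDzbar F.f z‖}

/-- The caustics f(𝒞). -/
def caustics (F : NondegenHM) : Set ℂ := F.f '' critSet F

/-- The preimage of η under f, inside ℂ ∖ {poles}. -/
def preimg (F : NondegenHM) (η : ℂ) : Set ℂ :=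
  {z : ℂ | (∀ j, z ≠ F.pole j) ∧ F.f z = η}

/-! ### Auxiliary definitions and lemmas -/

section Aux

/-- Continuity of `deriv` at a point of analyticity. -/
lemma contAt_deriv {g : ℂ → ℂ} {x : ℂ} (h : AnalyticAt ℂ g x) : ContinuousAt (deriv g) x := by
  have h1 : ContinuousAt (fderiv ℂ g) x := h.fderiv.continuousAt
  have h2 : ContinuousAt (fun z => (ContinuousLinearMap.apply ℂ ℂ (1 : ℂ)) (fderiv ℂ g z)) x :=
    ((ContinuousLinearMap.apply ℂ ℂ (1 : ℂ)).continuous.continuousAt).comp h1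
  simpa [fderiv_apply_one_eq_deriv] using h2

/-- The Wirtinger derivatives of `H + conj ∘ G` for `H`, `G` holomorphic. -/
lemma wirtinger_formula {H G f : ℂ → ℂ} {z : ℂ} (hH : DifferentiableAt ℂ H z)
    (hG : DifferentiableAt ℂ G z)
    (hf : f =ᶠ[nhds z] fun w => H w + (starRingEnd ℂ) (G w)) :
    wDz f z = deriv H z ∧ wDzbar f z = (starRingEnd ℂ) (deriv G z) := by
  have hHr : DifferentiableAt ℝ H z := hH.restrictScalars ℝ
  have hGr : DifferentiableAt ℝ G z := hG.restrictScalars ℝ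
  have hGc : DifferentiableAt ℝ (fun w => (starRingEnd ℂ) (G w)) z :=
    (Complex.conjCLE.differentiableAt).comp z hGr
  have hfd : fderiv ℝ f z = fderiv ℝ (fun w => H w + (starRingEnd ℂ) (G w)) z :=
    hf.fderiv_eq
  have hadd : ∀ v : ℂ, fderiv ℝ f z v
      = fderiv ℝ H z v + fderiv ℝ (fun w => (starRingEnd ℂ) (G w)) z v := by
    intro v
    rw [hfd, fderiv_fun_add hHr hGc]
    rfl
  have hHv : ∀ v : ℂ, fderiv ℝ H z v = v * deriv H z := by
    intro v
    rw [hH.fderiv_restrictScalars ℝ]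
    have : (fderiv ℂ H z) v = v • (fderiv ℂ H z) 1 := by
      rw [← ContinuousLinearMap.map_smul]; simp
    simpa [fderiv_apply_one_eq_deriv, smul_eq_mul] using this
  have hGv : ∀ v : ℂ, fderiv ℝ (fun w => (starRingEnd ℂ) (G w)) z v
      = (starRingEnd ℂ) (v * deriv G z) := by
    intro v
    have hcomp : fderiv ℝ (⇑Complex.conjCLE ∘ G) z
        = (Complex.conjCLE : ℂ →L[ℝ] ℂ).comp (fderiv ℝ G z) :=
      Complex.conjCLE.comp_fderiv
    have h1 : fderiv ℝ (fun w => (starRingEnd ℂ) (G w)) z v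
        = Complex.conjCLE (fderiv ℝ G z v) := by
      have := congrArg (fun L => L v) hcomp
      simpa [Function.comp_def] using this
    have h2 : fderiv ℝ G z v = v * deriv G z := by
      rw [hG.fderiv_restrictScalars ℝ]
      have : (fderiv ℂ G z) v = v • (fderiv ℂ G z) 1 := by
        rw [← ContinuousLinearMap.map_smul]; simp
      simpa [fderiv_apply_one_eq_deriv, smul_eq_mul] using this
    rw [h1, h2]; rfl
  have e1 : fderiv ℝ f z 1 = deriv H z + (starRingEnd ℂ) (deriv G z) := by
    rw [hadd 1, hHv 1, hGv 1]; simp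
  have eI : fderiv ℝ f z Complex.I
      = Complex.I * deriv H z - Complex.I * (starRingEnd ℂ) (deriv G z) := by
    rw [hadd Complex.I, hHv Complex.I, hGv Complex.I]
    simp [map_mul, Complex.conj_I]; ring
  have hI : Complex.I * Complex.I = -1 := Complex.I_mul_I
  constructor
  · rw [wDz, e1, eI]
    linear_combination (-(deriv H z) / 2 + (starRingEnd ℂ) (deriv G z) / 2) * hI
  · rw [wDzbar, e1, eI]
    linear_combination ((deriv H z) / 2 - (starRingEnd ℂ) (deriv G z) / 2) * hI

lemma eventually_notMem_finite {S : Set ℂ} (hS : S.Finite) (c : ℂ) :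
    ∀ᶠ z in nhdsWithin c {c}ᶜ, z ∉ S := by
  have h1 : IsClosed (S \ {c}) := hS.diff.isClosed
  have h2 : (S \ {c})ᶜ ∈ nhds c := h1.isOpen_compl.mem_nhds (by simp)
  filter_upwards [nhdsWithin_le_nhds h2, self_mem_nhdsWithin] with z hz hz'
  exact fun h0 => hz ⟨h0, hz'⟩

lemma key_tendsto {p q : Polynomial ℂ} (hq : q ≠ 0) {c a : ℂ} {n : ℕ} (hn : 1 ≤ n)
    (h : Tendsto (fun z => (z - c) ^ n * (p.eval z / q.eval z)) (nhdsWithin c {c}ᶜ) (nhds a)) :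
    Tendsto (fun z => (z - c) ^ (n + 1) * deriv (fun w => p.eval w / q.eval w) z)
      (nhdsWithin c {c}ᶜ) (nhds (-(n : ℂ) * a)) := by
  set R : ℂ → ℂ := fun w => p.eval w / q.eval w with hR
  set φ : ℂ → ℂ := fun z => (z - c) ^ n * R z with hφ
  set Φ : ℂ → ℂ := Function.update φ c a with hΦ
  have hqev : ∀ᶠ z in nhdsWithin c {c}ᶜ, q.eval z ≠ 0 := by
    have hfin : {x : ℂ | q.IsRoot x}.Finite := q.finite_setOf_isRoot hq
    filter_upwards [eventually_notMem_finite hfin c] with z hz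
    exact fun h0 => hz h0
  have hne : ∀ᶠ z in nhdsWithin c {c}ᶜ, z ≠ c := by
    filter_upwards [self_mem_nhdsWithin] with z hz using hz
  have hRdiff : ∀ {z : ℂ}, q.eval z ≠ 0 → DifferentiableAt ℂ R z := by
    intro z hz
    exact (Polynomial.differentiableAt p).div (Polynomial.differentiableAt q) hz
  have hΦφ : ∀ {z : ℂ}, z ≠ c → Φ =ᶠ[nhds z] φ := by
    intro z hz
    filter_upwards [isOpen_ne.mem_nhds hz] with w hw
    exact Function.update_of_ne hw _ _
  have hΦdiff : ∀ᶠ z in nhdsWithin c {c}ᶜ, DifferentiableAt ℂ Φ z := by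
    filter_upwards [hqev, hne] with z hz hzc
    have hd : DifferentiableAt ℂ φ z :=
      ((differentiableAt_id.sub_const c).pow n).mul (hRdiff hz)
    exact (hΦφ hzc).differentiableAt_iff.mpr hd
  have hΦc : ContinuousAt Φ c := continuousAt_update_same.2 h
  have hA : AnalyticAt ℂ Φ c :=
    Complex.analyticAt_of_differentiable_on_punctured_nhds_of_continuousAt hΦdiff hΦc
  have hdc : ContinuousAt (deriv Φ) c := contAt_deriv hA
  have t1 : Tendsto (fun z => (z - c) * deriv Φ z) (nhdsWithin c {c}ᶜ) (nhds 0) := by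
    have : Tendsto (fun z => (z - c) * deriv Φ z) (nhds c) (nhds ((c - c) * deriv Φ c)) :=
      ((continuous_id.sub continuous_const).continuousAt).mul hdc
    simpa using this.mono_left nhdsWithin_le_nhds
  have t2 : Tendsto (fun z => (z - c) * deriv Φ z - (n : ℂ) * φ z) (nhdsWithin c {c}ᶜ)
      (nhds (-(n : ℂ) * a)) := by
    have := t1.sub (h.const_mul (n : ℂ))
    simpa using this
  refine Tendsto.congr' ?_ t2
  filter_upwards [hqev, hne] with z hz hzc
  have hderivΦ : deriv Φ z = deriv φ z := (hΦφ hzc).deriv_eq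
  have hφ' : HasDerivAt φ
      ((n : ℂ) * (z - c) ^ (n - 1) * 1 * R z + (z - c) ^ n * deriv R z) z := by
    have h1 : HasDerivAt (fun w : ℂ => (w - c) ^ n) ((n : ℂ) * (z - c) ^ (n - 1) * 1) z :=
      ((hasDerivAt_id z).sub_const c).pow n
    exact h1.mul (hRdiff hz).hasDerivAt
  rw [hderivΦ, hφ'.deriv]
  obtain ⟨m, rfl⟩ : ∃ m, n = m + 1 := ⟨n - 1, (Nat.succ_pred_eq_of_pos hn).symm⟩
  simp only [Nat.add_sub_cancel, hφ, hR]
  push_cast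
  ring

lemma term_tendsto (B p c : ℂ) {n : ℕ} (hn : 1 ≤ n) :
    Tendsto (fun z => (z - c) ^ (n + 1) * (B / (z - p))) (nhdsWithin c {c}ᶜ) (nhds 0) := by
  by_cases hpc : p = c
  · subst hpc
    have h1 : Tendsto (fun z : ℂ => B * (z - p) ^ n) (nhdsWithin p {p}ᶜ) (nhds 0) := by
      have h2 : Tendsto (fun z : ℂ => B * (z - p) ^ n) (nhds p) (nhds (B * (p - p) ^ n)) :=
        continuousAt_const.mul (((continuous_id.sub continuous_const).pow n).continuousAt)
      simpa [sub_self, zero_pow (Nat.one_le_iff_ne_zero.mp hn)] using h2.mono_left nhdsWithin_le_nhds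
    refine Tendsto.congr' ?_ h1
    filter_upwards [self_mem_nhdsWithin] with z hz
    have hzp : z - p ≠ 0 := sub_ne_zero.mpr hz
    rw [pow_succ]
    field_simp
  · have hcp : c - p ≠ 0 := sub_ne_zero.mpr (fun h => hpc h.symm)
    have h2 : Tendsto (fun z : ℂ => (z - c) ^ (n + 1) * (B / (z - p))) (nhds c)
        (nhds ((c - c) ^ (n + 1) * (B / (c - p)))) :=
      (((continuous_id.sub continuous_const).pow (n + 1)).continuousAt).mul
        (continuousAt_const.div ((continuous_id.sub continuous_const).continuousAt) hcp)
    simpa [sub_self] using h2.mono_left nhdsWithin_le_nhds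

end Aux

namespace NondegenHM

/-- The rational function part of `r`, as a quotient of polynomial evaluations. -/
def rfunc (F : NondegenHM) : ℂ → ℂ :=
  fun w => Polynomial.eval w F.r.num / Polynomial.eval w F.r.denom

/-- The rational function part of `s`, as a quotient of polynomial evaluations. -/
def sfunc (F : NondegenHM) : ℂ → ℂ :=
  fun w => Polynomial.eval w F.s.num / Polynomial.eval w F.s.denom

/-- The analytic Wirtinger derivative formula for `f`. -/
def DRf (F : NondegenHM) (z : ℂ) : ℂ :=
  deriv (rfunc F) z + ∑ j, F.A j / (z - F.pole j)

/-- The anti-analytic Wirtinger derivative formula for `f` (before conjugation). -/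
def DSf (F : NondegenHM) (z : ℂ) : ℂ :=
  deriv (sfunc F) z + ∑ j, (starRingEnd ℂ) (F.A j) / (z - F.pole j)

lemma rfunc_def (F : NondegenHM) :
    rfunc F = fun w => Polynomial.eval w F.r.num / Polynomial.eval w F.r.denom := rfl

lemma sfunc_def (F : NondegenHM) :
    sfunc F = fun w => Polynomial.eval w F.s.num / Polynomial.eval w F.s.denom := rfl

lemma eval_r (F : NondegenHM) (z : ℂ) : F.r.eval (RingHom.id ℂ) z = rfunc F z := rfl

lemma eval_s (F : NondegenHM) (z : ℂ) : F.s.eval (RingHom.id ℂ) z = sfunc F z := rfl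

lemma denom_r_ne (F : NondegenHM) {z : ℂ} (hz : ∀ j, z ≠ F.pole j) :
    Polynomial.eval z F.r.denom ≠ 0 := by
  intro h0
  obtain ⟨j, hj⟩ := F.r_poles z h0
  exact hz j hj

lemma denom_s_ne (F : NondegenHM) {z : ℂ} (hz : ∀ j, z ≠ F.pole j) :
    Polynomial.eval z F.s.denom ≠ 0 := by
  intro h0
  obtain ⟨j, hj⟩ := F.s_poles z h0
  exact hz j hj

lemma isOpen_U (F : NondegenHM) : IsOpen {w : ℂ | ∀ j, w ≠ F.pole j} := by
  have h : {w : ℂ | ∀ j, w ≠ F.pole j} = (Set.range F.pole)ᶜ := by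
    ext w
    simp [Set.mem_range, not_exists, eq_comm]
  rw [h]
  exact (Set.finite_range F.pole).isClosed.isOpen_compl

/-- Local representation of `f` near a non-pole point. -/
lemma localRep (F : NondegenHM) {z : ℂ} (hz : ∀ j, z ≠ F.pole j) :
    ∃ H G : ℂ → ℂ, DifferentiableAt ℂ H z ∧ DifferentiableAt ℂ G z ∧
      F.f =ᶠ[nhds z] (fun w => H w + (starRingEnd ℂ) (G w)) ∧
      deriv H z = DRf F z ∧ deriv G z = DSf F z := by
  have hzp : ∀ j, z - F.pole j ≠ 0 := fun j => sub_ne_zero.mpr (hz j)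
  set cj : Fin F.m → ℂ := fun j => ((‖z - F.pole j‖ : ℝ) : ℂ) / (z - F.pole j)
    with hcj
  have hcne : ∀ j, ((‖z - F.pole j‖ : ℝ) : ℂ) ≠ 0 := by
    intro j
    simpa using (norm_ne_zero_iff.mpr (hzp j))
  have hcz : ∀ j, cj j * (z - F.pole j) = ((‖z - F.pole j‖ : ℝ) : ℂ) :=
    fun j => div_mul_cancel₀ _ (hzp j)
  have hslit : ∀ j, cj j * (z - F.pole j) ∈ Complex.slitPlane := by
    intro j
    rw [hcz j]
    exact Complex.ofReal_mem_slitPlane.mpr (norm_pos_iff.mpr (hzp j))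
  set L : Fin F.m → ℂ → ℂ := fun j w => Complex.log (cj j * (w - F.pole j)) with hL
  have hLd : ∀ j, HasDerivAt (L j) (1 / (z - F.pole j)) z := by
    intro j
    have hinner : HasDerivAt (fun w => cj j * (w - F.pole j)) (cj j * 1) z :=
      ((hasDerivAt_id z).sub_const _).const_mul (cj j)
    have hcomp := (Complex.hasDerivAt_log (hslit j)).comp z hinner
    refine hcomp.congr_deriv ?_
    rw [hcz j, hcj]
    field_simp [hcne j, hzp j]
  have hcabs : ∀ j (w : ℂ), ‖cj j * (w - F.pole j)‖ = ‖w - F.pole j‖ := by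
    intro j w
    rw [norm_mul, hcj]
    have : ‖((‖z - F.pole j‖ : ℝ) : ℂ) / (z - F.pole j)‖ = 1 := by
      rw [norm_div, Complex.norm_of_nonneg (norm_nonneg _),
        div_self (norm_ne_zero_iff.mpr (hzp j))]
    rw [this, one_mul]
  set H : ℂ → ℂ := fun w => rfunc F w + ∑ j, F.A j * L j w with hHdef
  set G : ℂ → ℂ := fun w => sfunc F w + ∑ j, (starRingEnd ℂ) (F.A j) * L j w with hGdef
  have hrd : DifferentiableAt ℂ (rfunc F) z :=
    (Polynomial.differentiableAt _).div (Polynomial.differentiableAt _) (F.denom_r_ne hz)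
  have hsd : DifferentiableAt ℂ (sfunc F) z :=
    (Polynomial.differentiableAt _).div (Polynomial.differentiableAt _) (F.denom_s_ne hz)
  have hHd : HasDerivAt H (deriv (rfunc F) z + ∑ j, F.A j * (1 / (z - F.pole j))) z :=
    (hrd.hasDerivAt).add (HasDerivAt.fun_sum fun j _ => (hLd j).const_mul (F.A j))
  have hGd : HasDerivAt G
      (deriv (sfunc F) z + ∑ j, (starRingEnd ℂ) (F.A j) * (1 / (z - F.pole j))) z :=
    (hsd.hasDerivAt).add (HasDerivAt.fun_sum fun j _ => (hLd j).const_mul _)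
  refine ⟨H, G, hHd.differentiableAt, hGd.differentiableAt, ?_, ?_, ?_⟩
  · filter_upwards [(isOpen_U F).mem_nhds hz] with w hw
    rw [F.f_eq w hw, eval_r, eval_s]
    have hterm : ∀ j, 2 * F.A j * ((Real.log ‖w - F.pole j‖ : ℝ) : ℂ)
        = F.A j * L j w + (starRingEnd ℂ) ((starRingEnd ℂ) (F.A j) * L j w) := by
      intro j
      rw [map_mul, Complex.conj_conj]
      have h1 : F.A j * L j w + F.A j * (starRingEnd ℂ) (L j w)
          = F.A j * (L j w + (starRingEnd ℂ) (L j w)) := by ring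
      rw [h1, Complex.add_conj]
      have h2 : (L j w).re = Real.log ‖w - F.pole j‖ := by
        rw [hL]
        simp only []
        rw [Complex.log_re, hcabs j w]
      rw [h2]
      push_cast
      ring
    have hsum : ∑ j, 2 * F.A j * ((Real.log ‖w - F.pole j‖ : ℝ) : ℂ)
        = ∑ j, (F.A j * L j w + (starRingEnd ℂ) ((starRingEnd ℂ) (F.A j) * L j w)) :=
      Finset.sum_congr rfl fun j _ => hterm j
    rw [hsum, Finset.sum_add_distrib]
    simp only [hHdef, hGdef, map_add, map_sum]
    ring
  · rw [hHd.deriv, DRf]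
    congr 1
    exact Finset.sum_congr rfl fun j _ => by rw [mul_one_div]
  · rw [hGd.deriv, DSf]
    congr 1
    exact Finset.sum_congr rfl fun j _ => by rw [mul_one_div]

/-- The Wirtinger derivatives of `f` at non-pole points. -/
lemma wirt_eq (F : NondegenHM) {z : ℂ} (hz : ∀ j, z ≠ F.pole j) :
    wDz F.f z = DRf F z ∧ wDzbar F.f z = (starRingEnd ℂ) (DSf F z) := by
  obtain ⟨H, G, hH, hG, hfe, hdH, hdG⟩ := localRep F hz
  have hw := wirtinger_formula hH hG hfe
  exact ⟨by rw [hw.1, hdH], by rw [hw.2, hdG]⟩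

lemma contAt_DRf (F : NondegenHM) {z : ℂ} (hz : ∀ j, z ≠ F.pole j) :
    ContinuousAt (DRf F) z ∧ ContinuousAt (DSf F) z := by
  have hzp : ∀ j, z - F.pole j ≠ 0 := fun j => sub_ne_zero.mpr (hz j)
  have hsumc : ∀ (B : Fin F.m → ℂ),
      ContinuousAt (fun w => ∑ j, B j / (w - F.pole j)) z := by
    intro B
    exact tendsto_finset_sum _ fun j _ =>
      continuousAt_const.div ((continuous_id.sub continuous_const).continuousAt) (hzp j)
  have hder : ∀ (p q : Polynomial ℂ), Polynomial.eval z q ≠ 0 →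
      ContinuousAt (deriv (fun w => Polynomial.eval w p / Polynomial.eval w q)) z := by
    intro p q hq
    have hV : IsOpen {w : ℂ | Polynomial.eval w q ≠ 0} := by
      have h : {w : ℂ | Polynomial.eval w q ≠ 0}
          = (fun w => Polynomial.eval w q) ⁻¹' ({0}ᶜ) := rfl
      rw [h]
      exact isOpen_compl_singleton.preimage q.continuous
    have hd : DifferentiableOn ℂ (fun w => Polynomial.eval w p / Polynomial.eval w q)
        {w : ℂ | Polynomial.eval w q ≠ 0} := by
      intro w hw
      have h1 : DifferentiableAt ℂ (fun x => Polynomial.eval x p) w := Polynomial.differentiableAt p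
      have h2 : DifferentiableAt ℂ (fun x => Polynomial.eval x q) w := Polynomial.differentiableAt q
      exact (h1.div h2 hw).differentiableWithinAt
    have han := (hd.analyticOnNhd hV).deriv
    exact (han z hq).continuousAt
  constructor
  · exact ((hder _ _ (F.denom_r_ne hz)).add (hsumc _))
  · exact ((hder _ _ (F.denom_s_ne hz)).add (hsumc _))

/-- Near each pole there are no critical points. -/
lemma avoid (F : NondegenHM) (j : Fin F.m) :
    ∀ᶠ z in nhdsWithin (F.pole j) {F.pole j}ᶜ, z ∉ critSet F := by
  obtain ⟨n, hn, a, b, hab, hra, hsb⟩ := F.pole_cond j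
  set c := F.pole j with hc
  have hra' : Tendsto
      (fun z => (z - c) ^ n * (Polynomial.eval z F.r.num / Polynomial.eval z F.r.denom))
      (nhdsWithin c {c}ᶜ) (nhds a) := hra
  have hsb' : Tendsto
      (fun z => (z - c) ^ n * (Polynomial.eval z F.s.num / Polynomial.eval z F.s.denom))
      (nhdsWithin c {c}ᶜ) (nhds b) := hsb
  have hR := key_tendsto (F.r.denom_ne_zero) hn hra'
  have hS := key_tendsto (F.s.denom_ne_zero) hn hsb'
  have hsumR : Tendsto (fun z => ∑ k, (z - c) ^ (n + 1) * (F.A k / (z - F.pole k)))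
      (nhdsWithin c {c}ᶜ) (nhds 0) := by
    have := tendsto_finset_sum Finset.univ
      (fun k (_ : k ∈ Finset.univ) => term_tendsto (F.A k) (F.pole k) c hn)
    simpa using this
  have hsumS : Tendsto
      (fun z => ∑ k, (z - c) ^ (n + 1) * ((starRingEnd ℂ) (F.A k) / (z - F.pole k)))
      (nhdsWithin c {c}ᶜ) (nhds 0) := by
    have := tendsto_finset_sum Finset.univ
      (fun k (_ : k ∈ Finset.univ) => term_tendsto ((starRingEnd ℂ) (F.A k)) (F.pole k) c hn)
    simpa using this
  have TDR : Tendsto (fun z => (z - c) ^ (n + 1) * DRf F z) (nhdsWithin c {c}ᶜ)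
      (nhds (-(n : ℂ) * a)) := by
    have h1 := hR.add hsumR
    refine Tendsto.congr (fun z => ?_) (by simpa using h1)
    simp [DRf, rfunc_def, mul_add, Finset.mul_sum]
  have TDS : Tendsto (fun z => (z - c) ^ (n + 1) * DSf F z) (nhdsWithin c {c}ᶜ)
      (nhds (-(n : ℂ) * b)) := by
    have h1 := hS.add hsumS
    refine Tendsto.congr (fun z => ?_) (by simpa using h1)
    simp [DSf, sfunc_def, mul_add, Finset.mul_sum]
  have TaR : Tendsto (fun z => ‖(z - c) ^ (n + 1) * DRf F z‖)
      (nhdsWithin c {c}ᶜ) (nhds (‖-(n : ℂ) * a‖)) :=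
    (continuous_norm.tendsto _).comp TDR
  have TaS : Tendsto (fun z => ‖(z - c) ^ (n + 1) * DSf F z‖)
      (nhdsWithin c {c}ᶜ) (nhds (‖-(n : ℂ) * b‖)) :=
    (continuous_norm.tendsto _).comp TDS
  have habne : ‖-(n : ℂ) * a‖ ≠ ‖-(n : ℂ) * b‖ := by
    have h1 : ‖-(n : ℂ)‖ = (n : ℝ) := by simp
    intro h
    apply hab
    rw [norm_mul, norm_mul, h1] at h
    exact mul_left_cancel₀ (Nat.cast_ne_zero.mpr (Nat.one_le_iff_ne_zero.mp hn)) h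
  have hev : ∀ᶠ z in nhdsWithin c {c}ᶜ,
      ‖(z - c) ^ (n + 1) * DRf F z‖
        - ‖(z - c) ^ (n + 1) * DSf F z‖ ≠ 0 :=
    (TaR.sub TaS).eventually_ne (sub_ne_zero.mpr habne)
  filter_upwards [hev] with z h1
  intro hcrit
  obtain ⟨hzU, heq⟩ := hcrit
  have hw := wirt_eq F hzU
  apply h1
  have habs : ‖DRf F z‖ = ‖DSf F z‖ := by
    rw [hw.1, hw.2] at heq
    simpa [Complex.norm_conj] using heq
  rw [norm_mul, norm_mul, habs, sub_self]

end NondegenHM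

/-- The critical set and the caustics of a non-degenerate harmonic mapping are compact,
and no pole is an accumulation point of the critical set. -/
theorem critSet_caustics_compact (F : NondegenHM) :
    IsCompact (critSet F) ∧ IsCompact (caustics F) ∧
    ∀ j, ¬ AccPt (F.pole j) (Filter.principal (critSet F)) := by
  have hbot : ∀ j : Fin F.m,
      nhdsWithin (F.pole j) {F.pole j}ᶜ ⊓ Filter.principal (critSet F) = ⊥ := by
    intro j
    rw [Filter.inf_principal_eq_bot]
    exact F.avoid j
  have hclosed : IsClosed (critSet F) := by
    rw [isClosed_iff_clusterPt]
    intro x hx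
    by_cases hxU : ∀ j, x ≠ F.pole j
    · refine ⟨hxU, ?_⟩
      obtain ⟨hDR, hDS⟩ := F.contAt_DRf hxU
      set u : ℂ → ℝ := fun w =>
        ‖NondegenHM.DRf F w‖ - ‖NondegenHM.DSf F w‖ with hu
      have hcu : ContinuousAt u x :=
        (continuous_norm.continuousAt.comp hDR).sub
          (continuous_norm.continuousAt.comp hDS)
      have hne : (nhds x ⊓ Filter.principal (critSet F)).NeBot := hx
      have t1 : Tendsto u (nhds x ⊓ Filter.principal (critSet F)) (nhds (u x)) :=
        hcu.tendsto.mono_left inf_le_left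
      have t2 : Tendsto u (nhds x ⊓ Filter.principal (critSet F)) (nhds 0) := by
        refine Tendsto.congr' ?_ tendsto_const_nhds
        filter_upwards [Filter.mem_inf_of_right (Filter.mem_principal_self (critSet F))]
          with w hw
        obtain ⟨hwU, hwe⟩ := hw
        have hwf := F.wirt_eq hwU
        rw [hwf.1, hwf.2] at hwe
        have : ‖NondegenHM.DRf F w‖ = ‖NondegenHM.DSf F w‖ := by
          simpa [Complex.norm_conj] using hwe
        simp [hu, this]
      have hux : u x = 0 := tendsto_nhds_unique t1 t2
      have hwf := F.wirt_eq hxU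
      rw [hwf.1, hwf.2, Complex.norm_conj]
      have := sub_eq_zero.mp hux
      exact this
    · exfalso
      push_neg at hxU
      obtain ⟨j, hj⟩ := hxU
      subst hj
      have hc : (critSet F)ᶜ ∈ nhds (F.pole j) := by
        obtain ⟨V, hVo, hxV, hVsub⟩ := mem_nhdsWithin.mp (F.avoid j)
        refine Filter.mem_of_superset (hVo.mem_nhds hxV) ?_
        intro w hw
        by_cases hwc : w = F.pole j
        · subst hwc
          intro hmem
          exact hmem.1 j rfl
        · exact hVsub ⟨hw, hwc⟩
      exact hx.ne (Filter.inf_principal_eq_bot.mpr hc)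
  have hcompact : IsCompact (critSet F) :=
    Metric.isCompact_of_isClosed_isBounded hclosed F.crit_bounded
  have hcont : ContinuousOn F.f (critSet F) := by
    intro x hx
    obtain ⟨H, G, hH, hG, hfe, -, -⟩ := F.localRep hx.1
    have h1 : ContinuousAt (fun w => H w + (starRingEnd ℂ) (G w)) x :=
      (hH.continuousAt).add (Complex.conjCLE.continuous.continuousAt.comp hG.continuousAt)
    exact (h1.congr hfe.symm).continuousWithinAt
  refine ⟨hcompact, hcompact.image_of_continuousOn hcont, ?_⟩
  intro j hacc
  exact hacc.ne (hbot j)
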